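/- Let n ≥ 2, let L > 0, and let C : ℝ → ℝ be an L-Lipschitz function. Define F₂ : ℝ^n → ℝ^n by F₂(x) = x + (C(x_n), 0, …, 0)ᵀ for x = (x₁, …, x_n)ᵀ. Then there is a constant L' ≥ 1, depending only on L and n, such that F₂ is L'-biLipschitz from (ℝ^n, D_{J_n}) to (ℝ^n, D_{J_n}). -/

import Mathlib

open scoped NNReal ENNReal

noncomputable section

/-- Action of a matrix on Euclidean space. -/
def matVec {ι : Type*} [Fintype ι] (M : Matrix ι ι ℝ) (v : EuclideanSpace ℝ ι) :
    EuclideanSpace ℝ ι :=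
  (WithLp.equiv 2 (ι → ℝ)).symm (M.mulVec (WithLp.equiv 2 (ι → ℝ) v))

open Classical in
/-- The parabolic visual quasimetric `D_A` associated with a matrix `A`:
`D_A x x = 0`, and for `x ≠ y`, `D_A x y = eᵗ` where `t` is the smallest real number with
`‖exp(-tA)(x-y)‖ = 1`. -/
def parabolicD {ι : Type*} [Fintype ι] [DecidableEq ι] (A : Matrix ι ι ℝ)
    (x y : EuclideanSpace ℝ ι) : ℝ :=
  if x = y then 0
  else Real.exp (sInf {t : ℝ | ‖matVec (NormedSpace.exp ((-t) • A)) (x - y)‖ = 1})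

/-- The `n × n` matrix with ones on the superdiagonal and zeros elsewhere. -/
def Nmat (n : ℕ) : Matrix (Fin n) (Fin n) ℝ :=
  fun i j => if (j : ℕ) = (i : ℕ) + 1 then 1 else 0

/-- The `n × n` Jordan block `Jₙ = Iₙ + N` with eigenvalue `1`. -/
def Jmat (n : ℕ) : Matrix (Fin n) (Fin n) ℝ := 1 + Nmat n

/-- The shear map `F₂(x) = x + (C(xₙ), 0, …, 0)ᵀ`. -/
def shiftMap {n : ℕ} (hn : 2 ≤ n) (C : ℝ → ℝ) (x : EuclideanSpace ℝ (Fin n)) :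
    EuclideanSpace ℝ (Fin n) :=
  x + (WithLp.equiv 2 (Fin n → ℝ)).symm
    (fun j : Fin n => if j = (⟨0, by omega⟩ : Fin n) then C (x ⟨n - 1, by omega⟩) else 0)

namespace Shear
variable {n : ℕ}

lemma matVec_apply (M : Matrix (Fin n) (Fin n) ℝ) (v : EuclideanSpace ℝ (Fin n)) (i : Fin n) :
    matVec M v i = (M.mulVec (fun j => v j)) i := rfl

lemma nmat_mulVec (u : Fin n → ℝ) (i : Fin n) :
    (Nmat n).mulVec u i = if h : (i : ℕ) + 1 < n then u ⟨i + 1, h⟩ else 0 := by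
  rw [Matrix.mulVec, dotProduct]
  simp only [Nmat, ite_mul, one_mul, zero_mul]
  split
  · rename_i h
    rw [Finset.sum_eq_single (⟨(i:ℕ)+1, h⟩ : Fin n)] <;> simp +contextual [Fin.ext_iff]
  · rename_i h
    apply Finset.sum_eq_zero
    intro j _
    rw [if_neg]
    intro hj
    exact h (hj ▸ j.2)

lemma nmat_pow_mulVec (k : ℕ) (u : Fin n → ℝ) (i : Fin n) :
    ((Nmat n ^ k).mulVec u) i = if h : (i : ℕ) + k < n then u ⟨i + k, h⟩ else 0 := by
  induction k generalizing u i with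
  | zero => simp [Matrix.one_mulVec, i.2]
  | succ k ih =>
    rw [pow_succ', ← Matrix.mulVec_mulVec, nmat_mulVec]
    split
    · rename_i h
      rw [ih]
      simp only [Fin.val_mk]
      split
      · rename_i h2
        rw [dif_pos (by omega : (i:ℕ) + (k+1) < n)]
        congr 1
        ext; simp; omega
      · rw [dif_neg (by omega)]
    · rw [dif_neg (by omega)]


lemma nmat_pow_eq_zero {k : ℕ} (hk : n ≤ k) : (Nmat n ^ k) = 0 := by
  ext i j
  have h1 := nmat_pow_mulVec k (Pi.single j 1) i
  rw [dif_neg (by omega), Matrix.mulVec_single] at h1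
  simp only [MulOpposite.op_one, one_smul] at h1
  simpa using h1

lemma exp_neg_smul_one (t : ℝ) :
    NormedSpace.exp (t • (1 : Matrix (Fin n) (Fin n) ℝ)) = Real.exp t • 1 := by
  letI : SeminormedRing (Matrix (Fin n) (Fin n) ℝ) := Matrix.linftyOpSemiNormedRing
  letI : NormedRing (Matrix (Fin n) (Fin n) ℝ) := Matrix.linftyOpNormedRing
  letI : NormedAlgebra ℝ (Matrix (Fin n) (Fin n) ℝ) := Matrix.linftyOpNormedAlgebra
  rw [← Algebra.algebraMap_eq_smul_one]
  erw [← NormedSpace.algebraMap_exp_comm]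
  rw [Real.exp_eq_exp_ℝ, Algebra.algebraMap_eq_smul_one]

lemma exp_smul_nmat (t : ℝ) :
    NormedSpace.exp (t • Nmat n) =
      ∑ k ∈ Finset.range n, (t ^ k * ((k.factorial : ℝ))⁻¹) • (Nmat n ^ k) := by
  rw [NormedSpace.exp_eq_tsum (𝕂 := ℝ)]
  show ∑' (k : ℕ), ((k.factorial : ℝ))⁻¹ • (t • Nmat n) ^ k = _
  rw [tsum_eq_sum (f := fun k => ((k.factorial : ℝ))⁻¹ • (t • Nmat n) ^ k)
    (s := Finset.range n) ?_]
  · refine Finset.sum_congr rfl fun k _ => ?_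
    rw [smul_pow, smul_smul, mul_comm]
  · intro k hk
    show ((k.factorial : ℝ))⁻¹ • (t • Nmat n) ^ k = 0
    rw [smul_pow, nmat_pow_eq_zero (by simpa using hk)]
    simp

lemma exp_neg_smul_J (t : ℝ) :
    NormedSpace.exp ((-t) • Jmat n) =
      Real.exp (-t) • ∑ k ∈ Finset.range n, ((-t) ^ k * ((k.factorial : ℝ))⁻¹) • (Nmat n ^ k) := by
  have hc : Commute ((-t) • (1 : Matrix (Fin n) (Fin n) ℝ)) ((-t) • Nmat n) :=
    ((Commute.one_left _).smul_left _).smul_right _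
  have : (-t) • Jmat n = (-t) • (1 : Matrix (Fin n) (Fin n) ℝ) + (-t) • Nmat n := by
    rw [Jmat, smul_add]
  rw [this, Matrix.exp_add_of_commute _ _ hc, exp_neg_smul_one, exp_smul_nmat,
    Matrix.smul_mul, Matrix.one_mul]


lemma sum_mulVec {ι : Type*} (s : Finset ι) (A : ι → Matrix (Fin n) (Fin n) ℝ) (u : Fin n → ℝ) :
    (∑ k ∈ s, A k).mulVec u = ∑ k ∈ s, (A k).mulVec u := by
  induction s using Finset.cons_induction with
  | empty => simp [Matrix.zero_mulVec]
  | cons a s ha ih => simp only [Finset.sum_cons, Matrix.add_mulVec, ih]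

/-- The matrix action of `exp (-t • J)`. -/
def gv (t : ℝ) (v : EuclideanSpace ℝ (Fin n)) : EuclideanSpace ℝ (Fin n) :=
  matVec (NormedSpace.exp ((-t) • Jmat n)) v

/-- The norm profile. -/
def phi (v : EuclideanSpace ℝ (Fin n)) (t : ℝ) : ℝ := ‖gv t v‖

lemma gv_apply (t : ℝ) (v : EuclideanSpace ℝ (Fin n)) (i : Fin n) :
    gv t v i = Real.exp (-t) *
      ∑ k ∈ Finset.range n, ((-t) ^ k * ((k.factorial : ℝ))⁻¹) *
        ((Nmat n ^ k).mulVec (fun j => v j) i) := by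
  rw [gv, matVec_apply, exp_neg_smul_J, Matrix.smul_mulVec, sum_mulVec]
  rw [Pi.smul_apply, smul_eq_mul]
  congr 1
  rw [Finset.sum_apply]
  exact Finset.sum_congr rfl fun k _ => by rw [Matrix.smul_mulVec, Pi.smul_apply, smul_eq_mul]

lemma abs_apply_le_norm (v : EuclideanSpace ℝ (Fin n)) (i : Fin n) : |v i| ≤ ‖v‖ := by
  rw [EuclideanSpace.norm_eq]
  have h1 : |v i| = Real.sqrt (‖v i‖ ^ 2) := by
    rw [Real.norm_eq_abs, Real.sqrt_sq_eq_abs, abs_abs]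
  rw [h1]
  apply Real.sqrt_le_sqrt
  exact Finset.single_le_sum (f := fun j => ‖v j‖ ^ 2) (fun j _ => sq_nonneg _)
    (Finset.mem_univ i)

lemma norm_matVec_npow_le (k : ℕ) (v : EuclideanSpace ℝ (Fin n)) :
    ‖matVec (Nmat n ^ k) v‖ ≤ ‖v‖ := by
  rcases Nat.eq_zero_or_pos n with rfl | hn0
  · simp [EuclideanSpace.norm_eq]
  rw [EuclideanSpace.norm_eq, EuclideanSpace.norm_eq]
  apply Real.sqrt_le_sqrt
  have hterm : ∀ i : Fin n, ‖matVec (Nmat n ^ k) v i‖ ^ 2 =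
      if h : (i : ℕ) + k < n then ‖v ⟨(i : ℕ) + k, h⟩‖ ^ 2 else 0 := by
    intro i
    rw [matVec_apply, nmat_pow_mulVec]
    split <;> simp
  rw [Finset.sum_congr rfl fun i _ => hterm i]
  rw [← Finset.sum_filter_add_sum_filter_not Finset.univ (fun i : Fin n => (i : ℕ) + k < n)]
  have h2 : ∑ i ∈ Finset.univ.filter (fun i : Fin n => ¬ ((i : ℕ) + k < n)),
      (if h : (i : ℕ) + k < n then ‖v ⟨(i : ℕ) + k, h⟩‖ ^ 2 else 0) = 0 := by
    apply Finset.sum_eq_zero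
    intro i hi
    rw [Finset.mem_filter] at hi
    rw [dif_neg hi.2]
  rw [h2, add_zero]
  set s := Finset.univ.filter (fun i : Fin n => (i : ℕ) + k < n) with hs
  set σ : Fin n → Fin n := fun i => ⟨((i : ℕ) + k) % n, Nat.mod_lt _ hn0⟩ with hσ
  have hσs : ∀ i ∈ s, (σ i : ℕ) = (i : ℕ) + k := by
    intro i hi
    rw [Finset.mem_filter] at hi
    simp [hσ, Nat.mod_eq_of_lt hi.2]
  have hcongr : ∑ i ∈ s, (if h : (i : ℕ) + k < n then ‖v ⟨(i : ℕ) + k, h⟩‖ ^ 2 else 0) =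
      ∑ i ∈ s, ‖v (σ i)‖ ^ 2 := by
    apply Finset.sum_congr rfl
    intro i hi
    have hmem := hi
    rw [Finset.mem_filter] at hmem
    rw [dif_pos hmem.2]
    have : (⟨(i : ℕ) + k, hmem.2⟩ : Fin n) = σ i := by
      apply Fin.ext
      exact (hσs i hi).symm
    rw [this]
  rw [hcongr]
  have hinj : Set.InjOn σ s := by
    intro a ha b hb hab
    have := hσs a ha
    have := hσs b hb
    apply Fin.ext
    have : ((σ a : Fin n) : ℕ) = (σ b : ℕ) := by rw [hab]
    omega
  have himg : ∑ i ∈ s, ‖v (σ i)‖ ^ 2 = ∑ j ∈ s.image σ, ‖v j‖ ^ 2 :=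
    (Finset.sum_image (f := fun j : Fin n => ‖v j‖ ^ 2) (g := σ) (fun a ha b hb hab => hinj ha hb hab)).symm
  rw [himg]
  apply Finset.sum_le_sum_of_subset_of_nonneg (Finset.subset_univ _)
  intro i _ _
  exact sq_nonneg _


lemma matVec_eq_linearEquiv (M : Matrix (Fin n) (Fin n) ℝ) (v : EuclideanSpace ℝ (Fin n)) :
    matVec M v = (WithLp.linearEquiv 2 ℝ (Fin n → ℝ)).symm
      (M.mulVec ((WithLp.linearEquiv 2 ℝ (Fin n → ℝ)) v)) := rfl

lemma gv_eq (t : ℝ) (v : EuclideanSpace ℝ (Fin n)) :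
    gv t v = Real.exp (-t) •
      ∑ k ∈ Finset.range n, ((-t) ^ k * ((k.factorial : ℝ))⁻¹) • matVec (Nmat n ^ k) v := by
  rw [gv, matVec_eq_linearEquiv, exp_neg_smul_J, Matrix.smul_mulVec, sum_mulVec,
    map_smul, map_sum]
  congr 1
  refine Finset.sum_congr rfl fun k _ => ?_
  rw [Matrix.smul_mulVec, map_smul]
  rfl

lemma matVec_add (M : Matrix (Fin n) (Fin n) ℝ) (v w : EuclideanSpace ℝ (Fin n)) :
    matVec M (v + w) = matVec M v + matVec M w := by
  rw [matVec_eq_linearEquiv, matVec_eq_linearEquiv, matVec_eq_linearEquiv, map_add,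
    Matrix.mulVec_add, map_add]

lemma gv_add (t : ℝ) (v w : EuclideanSpace ℝ (Fin n)) :
    gv t (v + w) = gv t v + gv t w := matVec_add _ _ _

lemma gv_comp (s t : ℝ) (v : EuclideanSpace ℝ (Fin n)) :
    gv s (gv t v) = gv (s + t) v := by
  rw [gv, gv, gv, matVec_eq_linearEquiv, matVec_eq_linearEquiv, matVec_eq_linearEquiv]
  rw [LinearEquiv.apply_symm_apply, Matrix.mulVec_mulVec]
  congr 2
  rw [← Matrix.exp_add_of_commute _ _ (((Commute.refl (Jmat n)).smul_left _).smul_right _)]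
  congr 1
  rw [← add_smul]
  congr 1
  ring

lemma gv_zero (v : EuclideanSpace ℝ (Fin n)) : gv 0 v = v := by
  rw [gv, neg_zero, zero_smul, NormedSpace.exp_zero, matVec_eq_linearEquiv, Matrix.one_mulVec,
    LinearEquiv.symm_apply_apply]

lemma phi_le (hn : 1 ≤ n) (t : ℝ) (v : EuclideanSpace ℝ (Fin n)) :
    phi v t ≤ Real.exp (-t) * ((1 + |t|) ^ (n - 1) * ‖v‖) := by
  rw [phi, gv_eq, norm_smul, Real.norm_eq_abs, abs_of_pos (Real.exp_pos _)]
  gcongr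
  calc ‖∑ k ∈ Finset.range n, ((-t) ^ k * ((k.factorial : ℝ))⁻¹) • matVec (Nmat n ^ k) v‖
      ≤ ∑ k ∈ Finset.range n, ‖((-t) ^ k * ((k.factorial : ℝ))⁻¹) • matVec (Nmat n ^ k) v‖ :=
        norm_sum_le _ _
    _ ≤ ∑ k ∈ Finset.range n, ((n-1).choose k : ℝ) * |t| ^ k * ‖v‖ := by
        apply Finset.sum_le_sum
        intro k hk
        rw [norm_smul, Real.norm_eq_abs, abs_mul, abs_pow, abs_neg]
        have h1 : |((k.factorial : ℝ))⁻¹| ≤ 1 := by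
          rw [abs_of_nonneg (by positivity)]
          rw [inv_le_one_iff₀]
          right
          exact_mod_cast Nat.one_le_iff_ne_zero.mpr (Nat.factorial_ne_zero k)
        have h2 : (1 : ℝ) ≤ ((n-1).choose k : ℝ) := by
          have : 0 < (n-1).choose k := Nat.choose_pos (by
            rw [Finset.mem_range] at hk; omega)
          exact_mod_cast this
        calc |t| ^ k * |((k.factorial : ℝ))⁻¹| * ‖matVec (Nmat n ^ k) v‖
            ≤ |t| ^ k * 1 * ‖v‖ := by
              gcongr
              exact norm_matVec_npow_le k v
          _ = 1 * |t| ^ k * ‖v‖ := by ring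
          _ ≤ ((n-1).choose k : ℝ) * |t| ^ k * ‖v‖ := by gcongr
    _ = (∑ k ∈ Finset.range n, ((n-1).choose k : ℝ) * |t| ^ k) * ‖v‖ := by
        rw [Finset.sum_mul]
    _ ≤ (1 + |t|) ^ (n - 1) * ‖v‖ := by
        gcongr
        have hrw : (1 + |t|) ^ (n - 1) = ∑ k ∈ Finset.range (n - 1 + 1),
            ((n-1).choose k : ℝ) * |t| ^ k := by
          rw [add_comm, add_pow]
          refine Finset.sum_congr rfl fun k hk => ?_
          rw [one_pow]
          ring
        rw [hrw]
        have : n = n - 1 + 1 := by omega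
        rw [← this]

lemma phi_nonneg (v : EuclideanSpace ℝ (Fin n)) (t : ℝ) : 0 ≤ phi v t := norm_nonneg _

lemma phi_ge (hn : 1 ≤ n) (t : ℝ) (v : EuclideanSpace ℝ (Fin n)) :
    ‖v‖ ≤ Real.exp t * ((1 + |t|) ^ (n - 1) * phi v t) := by
  have h := phi_le hn (-t) (gv t v)
  rw [neg_neg, abs_neg] at h
  rw [phi, gv_comp, neg_add_cancel, gv_zero] at h
  exact h

lemma phi_shift (hn : 1 ≤ n) {s : ℝ} (hs : 0 ≤ s) (t : ℝ) (v : EuclideanSpace ℝ (Fin n)) :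
    phi v (t + s) ≤ Real.exp (-s) * (1 + s) ^ (n - 1) * phi v t := by
  have h := phi_le hn s (gv t v)
  rw [phi, show t + s = s + t from add_comm t s, ← gv_comp s t v, abs_of_nonneg hs] at *
  calc ‖gv s (gv t v)‖ ≤ Real.exp (-s) * ((1 + s) ^ (n - 1) * ‖gv t v‖) := h
    _ = Real.exp (-s) * (1 + s) ^ (n - 1) * phi v t := by rw [phi]; ring

lemma phi_pos (hn : 1 ≤ n) {v : EuclideanSpace ℝ (Fin n)} (hv : v ≠ 0) (t : ℝ) :
    0 < phi v t := by
  rcases (phi_nonneg v t).lt_or_eq with h | h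
  · exact h
  exfalso
  have h2 := phi_ge hn t v
  rw [← h] at h2
  simp only [mul_zero] at h2
  exact hv (norm_le_zero_iff.mp h2)


/-- The vector `(δ, 0, …, 0)`. -/
def e0 (hn : 0 < n) (δ : ℝ) : EuclideanSpace ℝ (Fin n) :=
  (WithLp.equiv 2 (Fin n → ℝ)).symm (fun j => if j = (⟨0, hn⟩ : Fin n) then δ else 0)

lemma e0_apply (hn : 0 < n) (δ : ℝ) (j : Fin n) :
    e0 hn δ j = if j = (⟨0, hn⟩ : Fin n) then δ else 0 := rfl

lemma norm_e0 (hn : 0 < n) (δ : ℝ) : ‖e0 hn δ‖ = |δ| := by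
  rw [EuclideanSpace.norm_eq]
  have h : ∀ j : Fin n, ‖e0 hn δ j‖ ^ 2 = if j = (⟨0, hn⟩ : Fin n) then δ ^ 2 else 0 := by
    intro j
    rw [e0_apply]
    split <;> simp
  rw [Finset.sum_congr rfl fun j _ => h j, Finset.sum_ite_eq' Finset.univ,
    if_pos (Finset.mem_univ _), Real.sqrt_sq_eq_abs]

lemma matVec_one (v : EuclideanSpace ℝ (Fin n)) : matVec 1 v = v := by
  rw [matVec_eq_linearEquiv, Matrix.one_mulVec, LinearEquiv.symm_apply_apply]

lemma matVec_npow_e0 (hn : 0 < n) {k : ℕ} (hk : k ≠ 0) (δ : ℝ) :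
    matVec (Nmat n ^ k) (e0 hn δ) = 0 := by
  ext i
  rw [matVec_apply, nmat_pow_mulVec]
  show _ = (0 : ℝ)
  split
  · rw [e0_apply, if_neg]
    intro h
    rw [Fin.ext_iff] at h
    simp only [Fin.val_mk] at h
    omega
  · rfl

lemma gv_e0 (hn : 0 < n) (t δ : ℝ) : gv t (e0 hn δ) = Real.exp (-t) • e0 hn δ := by
  rw [gv_eq]
  congr 1
  rw [Finset.sum_eq_single_of_mem 0 (Finset.mem_range.mpr hn)]
  · simp only [pow_zero, Nat.factorial_zero, Nat.cast_one, inv_one, mul_one, one_smul, pow_zero]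
    rw [matVec_one]
  · intro k _ hk
    rw [matVec_npow_e0 hn hk, smul_zero]

lemma gv_last (hn : 0 < n) (t : ℝ) (v : EuclideanSpace ℝ (Fin n)) :
    gv t v ⟨n - 1, by omega⟩ = Real.exp (-t) * v ⟨n - 1, by omega⟩ := by
  rw [gv_apply]
  congr 1
  rw [Finset.sum_eq_single_of_mem 0 (Finset.mem_range.mpr hn)]
  · rw [nmat_pow_mulVec]
    simp only [Fin.val_mk]
    rw [dif_pos (by omega : n - 1 + 0 < n)]
    simp
  · intro k _ hk
    rw [nmat_pow_mulVec]
    simp only [Fin.val_mk]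
    rw [dif_neg (by omega), mul_zero]

lemma abs_last_le_phi (hn : 0 < n) (t : ℝ) (v : EuclideanSpace ℝ (Fin n)) :
    Real.exp (-t) * |v ⟨n - 1, by omega⟩| ≤ phi v t := by
  have h := abs_apply_le_norm (gv t v) ⟨n - 1, by omega⟩
  rw [gv_last hn, abs_mul, abs_of_pos (Real.exp_pos _)] at h
  exact h

lemma phi_compare (hn : 0 < n) {L δ : ℝ} (hL : 0 ≤ L) {v : EuclideanSpace ℝ (Fin n)}
    (hδ : |δ| ≤ L * |v ⟨n - 1, by omega⟩|) (t : ℝ) :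
    phi (v + e0 hn δ) t ≤ (1 + L) * phi v t := by
  rw [phi, gv_add, gv_e0]
  calc ‖gv t v + Real.exp (-t) • e0 hn δ‖ ≤ ‖gv t v‖ + ‖Real.exp (-t) • e0 hn δ‖ := norm_add_le _ _
    _ = phi v t + Real.exp (-t) * |δ| := by
        rw [norm_smul, norm_e0, Real.norm_eq_abs, abs_of_pos (Real.exp_pos _)]; rfl
    _ ≤ phi v t + Real.exp (-t) * (L * |v ⟨n - 1, by omega⟩|) := by
        gcongr
    _ = phi v t + L * (Real.exp (-t) * |v ⟨n - 1, by omega⟩|) := by ring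
    _ ≤ phi v t + L * phi v t := by
        gcongr
        exact abs_last_le_phi hn t v
    _ = (1 + L) * phi v t := by ring

lemma phi_cont (v : EuclideanSpace ℝ (Fin n)) : Continuous (phi v) := by
  have h : phi v = fun t => ‖Real.exp (-t) •
      ∑ k ∈ Finset.range n, ((-t) ^ k * ((k.factorial : ℝ))⁻¹) • matVec (Nmat n ^ k) v‖ :=
    funext fun t => by rw [phi, gv_eq]
  rw [h]
  apply Continuous.norm
  apply Continuous.fun_smul
  · exact (Real.continuous_exp.comp continuous_neg)
  · apply continuous_finset_sum
    intro k _
    exact ((continuous_pow k).comp continuous_neg |>.mul continuous_const).smul continuous_const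

lemma decay (m : ℕ) :
    Filter.Tendsto (fun s : ℝ => Real.exp (-s) * (1 + s) ^ m) Filter.atTop (nhds 0) := by
  have h := Real.tendsto_pow_mul_exp_neg_atTop_nhds_zero m
  have h2 : Filter.Tendsto (fun s : ℝ => 1 + s) Filter.atTop Filter.atTop :=
    Filter.tendsto_atTop_add_const_left _ _ Filter.tendsto_id
  have h3 := h.comp h2
  have heq : (fun s : ℝ => Real.exp (-s) * (1 + s) ^ m) =
      fun s => Real.exp 1 * ((1 + s) ^ m * Real.exp (-(1 + s))) := by
    funext s
    rw [show -s = 1 + -(1+s) by ring, Real.exp_add]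
    ring
  rw [heq]
  simpa using h3.const_mul (Real.exp 1)


/-- The level set `{t | ‖exp(-tJ) v‖ = 1}`. -/
def S (v : EuclideanSpace ℝ (Fin n)) : Set ℝ := {t : ℝ | phi v t = 1}

lemma atBot_gt_one (hn : 1 ≤ n) {v : EuclideanSpace ℝ (Fin n)} (hv : v ≠ 0) :
    ∃ T : ℝ, ∀ t ≤ T, 1 < phi v t := by
  have hpos := phi_pos hn hv 0
  have hev : ∀ᶠ s in Filter.atTop,
      Real.exp (-s) * (1 + s) ^ (n - 1) < phi v 0 ∧ (0:ℝ) ≤ s :=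
    ((decay (n-1)).eventually (gt_mem_nhds hpos)).and (Filter.eventually_ge_atTop 0)
  obtain ⟨a, ha⟩ := Filter.eventually_atTop.mp hev
  refine ⟨-a, fun t ht => ?_⟩
  have hs : a ≤ -t := by linarith
  obtain ⟨hlt, hs0⟩ := ha (-t) hs
  have hshift := phi_shift hn hs0 t v
  rw [show t + -t = 0 by ring] at hshift
  by_contra hle
  push_neg at hle
  have : phi v 0 ≤ Real.exp (-(-t)) * (1 + -t) ^ (n - 1) * phi v t := hshift
  nlinarith [phi_nonneg v t, phi_nonneg v 0,
    mul_pos (Real.exp_pos (-(-t))) (pow_pos (by linarith : (0:ℝ) < 1 + -t) (n-1))]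

lemma exists_small (hn : 1 ≤ n) {v : EuclideanSpace ℝ (Fin n)} (hv : v ≠ 0) :
    ∃ t : ℝ, phi v t < 1 := by
  have hpos := phi_pos hn hv 0
  have hev : ∀ᶠ s in Filter.atTop,
      Real.exp (-s) * (1 + s) ^ (n - 1) < (phi v 0)⁻¹ ∧ (0:ℝ) ≤ s :=
    ((decay (n-1)).eventually (gt_mem_nhds (inv_pos.mpr hpos))).and
      (Filter.eventually_ge_atTop 0)
  obtain ⟨s, hlt, hs0⟩ := hev.exists
  refine ⟨0 + s, ?_⟩
  calc phi v (0 + s) ≤ Real.exp (-s) * (1 + s) ^ (n - 1) * phi v 0 := phi_shift hn hs0 0 v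
    _ < (phi v 0)⁻¹ * phi v 0 := by
        apply mul_lt_mul_of_pos_right hlt hpos
    _ = 1 := inv_mul_cancel₀ (ne_of_gt hpos)

lemma exists_mem_S_le (hn : 1 ≤ n) {v : EuclideanSpace ℝ (Fin n)} (hv : v ≠ 0)
    {b : ℝ} (hb : phi v b ≤ 1) : ∃ t ∈ S v, t ≤ b := by
  obtain ⟨T, hT⟩ := atBot_gt_one hn hv
  have ha : min T b ≤ b := min_le_right _ _
  have hge : 1 ≤ phi v (min T b) := le_of_lt (hT _ (min_le_left _ _))
  have := intermediate_value_Icc' ha (phi_cont v).continuousOn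
  have h1 : (1:ℝ) ∈ Set.Icc (phi v b) (phi v (min T b)) := ⟨hb, hge⟩
  obtain ⟨t, ht, heq⟩ := this h1
  exact ⟨t, heq, ht.2⟩

lemma S_nonempty (hn : 1 ≤ n) {v : EuclideanSpace ℝ (Fin n)} (hv : v ≠ 0) :
    (S v).Nonempty := by
  obtain ⟨t2, ht2⟩ := exists_small hn hv
  obtain ⟨t, ht, _⟩ := exists_mem_S_le hn hv (le_of_lt ht2)
  exact ⟨t, ht⟩

lemma S_bddBelow (hn : 1 ≤ n) {v : EuclideanSpace ℝ (Fin n)} (hv : v ≠ 0) :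
    BddBelow (S v) := by
  obtain ⟨T, hT⟩ := atBot_gt_one hn hv
  refine ⟨T, fun t ht => ?_⟩
  by_contra hlt
  push_neg at hlt
  exact absurd ht.symm (ne_of_lt (hT t (le_of_lt hlt)))

lemma sInf_S_mem (hn : 1 ≤ n) {v : EuclideanSpace ℝ (Fin n)} (hv : v ≠ 0) :
    sInf (S v) ∈ S v :=
  (isClosed_eq (phi_cont v) continuous_const).csInf_mem (S_nonempty hn hv) (S_bddBelow hn hv)

lemma sInf_comparison (hn : 1 ≤ n) {v w : EuclideanSpace ℝ (Fin n)} (hv : v ≠ 0) (hw : w ≠ 0)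
    {K s₀ : ℝ} (hs₀ : 0 ≤ s₀) (hK : 0 ≤ K)
    (hcomp : ∀ t : ℝ, phi w t ≤ K * phi v t)
    (hKs : Real.exp (-s₀) * (1 + s₀) ^ (n - 1) * K ≤ 1) :
    sInf (S w) ≤ sInf (S v) + s₀ := by
  have hvmem := sInf_S_mem hn hv
  set tv := sInf (S v) with htv
  have hv1 : phi v tv = 1 := hvmem
  have h1 : phi w (tv + s₀) ≤ 1 := by
    calc phi w (tv + s₀) ≤ K * phi v (tv + s₀) := hcomp _
      _ ≤ K * (Real.exp (-s₀) * (1 + s₀) ^ (n - 1) * phi v tv) :=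
          mul_le_mul_of_nonneg_left (phi_shift hn hs₀ tv v) hK
      _ = Real.exp (-s₀) * (1 + s₀) ^ (n - 1) * K := by rw [hv1]; ring
      _ ≤ 1 := hKs
  obtain ⟨t, ht, hle⟩ := exists_mem_S_le hn hw h1
  exact le_trans (csInf_le (S_bddBelow hn hw) ht) hle


lemma e0_neg (hn : 0 < n) (δ : ℝ) : e0 hn (-δ) = - e0 hn δ := by
  ext j
  show (if j = (⟨0, hn⟩ : Fin n) then -δ else 0) = -(if j = (⟨0, hn⟩ : Fin n) then δ else 0)
  split <;> simp

lemma e0_zero (hn : 0 < n) : e0 hn 0 = 0 := by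
  ext j
  show (if j = (⟨0, hn⟩ : Fin n) then (0:ℝ) else 0) = 0
  split <;> rfl

lemma e0_last (hn : 2 ≤ n) (δ : ℝ) :
    e0 (by omega) δ (⟨n - 1, by omega⟩ : Fin n) = 0 := by
  rw [e0_apply, if_neg]
  intro h
  rw [Fin.ext_iff] at h
  simp only [Fin.val_mk] at h
  omega

lemma shiftMap_sub (hn : 2 ≤ n) (C : ℝ → ℝ) (x y : EuclideanSpace ℝ (Fin n)) :
    shiftMap hn C x - shiftMap hn C y =
      (x - y) + e0 (by omega) (C (x ⟨n - 1, by omega⟩) - C (y ⟨n - 1, by omega⟩)) := by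
  unfold shiftMap
  have h1 : ∀ a b : EuclideanSpace ℝ (Fin n), ∀ c d : EuclideanSpace ℝ (Fin n),
      (a + c) - (b + d) = (a - b) + (c - d) := fun a b c d => by abel
  rw [h1]
  congr 1
  ext j
  show (if j = (⟨0, by omega⟩ : Fin n) then C (x ⟨n - 1, by omega⟩) else 0) -
      (if j = (⟨0, by omega⟩ : Fin n) then C (y ⟨n - 1, by omega⟩) else 0) = _
  rw [e0_apply]
  split <;> simp

lemma euclid_add_apply (u w : EuclideanSpace ℝ (Fin n)) (i : Fin n) :
    (u + w) i = u i + w i := rfl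

lemma euclid_sub_apply (u w : EuclideanSpace ℝ (Fin n)) (i : Fin n) :
    (u - w) i = u i - w i := rfl

end Shear

open Shear

/-- Lemma 6.2: if `C : ℝ → ℝ` is `L`-Lipschitz then `F₂(x) = x + (C(xₙ),0,…,0)ᵀ` is
`L'`-biLipschitz on `(ℝⁿ, D_{Jₙ})`, with `L'` depending only on `L` and `n`. -/
theorem shear_is_biLipschitz {n : ℕ} (hn : 2 ≤ n) (L : ℝ) (hL : 0 < L) :
    ∃ L' : ℝ, 1 ≤ L' ∧ ∀ C : ℝ → ℝ, (∀ s t : ℝ, |C s - C t| ≤ L * |s - t|) →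
      ∀ x y : EuclideanSpace ℝ (Fin n),
        parabolicD (Jmat n) x y / L' ≤ parabolicD (Jmat n) (shiftMap hn C x) (shiftMap hn C y) ∧
        parabolicD (Jmat n) (shiftMap hn C x) (shiftMap hn C y) ≤ L' * parabolicD (Jmat n) x y := by
  have hn0 : 0 < n := by omega
  have hn1 : 1 ≤ n := by omega
  -- choose the shift s₀
  have hev : ∀ᶠ s in Filter.atTop,
      Real.exp (-s) * (1 + s) ^ (n - 1) < (1 + L)⁻¹ ∧ (0:ℝ) ≤ s :=
    ((decay (n-1)).eventually (gt_mem_nhds (inv_pos.mpr (by linarith)))).and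
      (Filter.eventually_ge_atTop 0)
  obtain ⟨s₀, hs1, hs0⟩ := hev.exists
  have hKs : Real.exp (-s₀) * (1 + s₀) ^ (n - 1) * (1 + L) ≤ 1 := by
    have h1L : (0:ℝ) < 1 + L := by linarith
    calc Real.exp (-s₀) * (1 + s₀) ^ (n - 1) * (1 + L) ≤ (1 + L)⁻¹ * (1 + L) := by
          apply mul_le_mul_of_nonneg_right (le_of_lt hs1) (le_of_lt h1L)
      _ = 1 := inv_mul_cancel₀ (ne_of_gt h1L)
  refine ⟨Real.exp s₀, Real.one_le_exp hs0, ?_⟩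
  intro C hC x y
  by_cases hxy : x = y
  · subst hxy
    rw [parabolicD, if_pos rfl, parabolicD, if_pos rfl]
    constructor
    · rw [zero_div]
    · rw [mul_zero]
  · set v : EuclideanSpace ℝ (Fin n) := x - y with hvdef
    set δ : ℝ := C (x ⟨n - 1, by omega⟩) - C (y ⟨n - 1, by omega⟩) with hδdef
    have hv : v ≠ 0 := sub_ne_zero.mpr hxy
    have hweq : shiftMap hn C x - shiftMap hn C y = v + e0 hn0 δ := shiftMap_sub hn C x y
    have hvlast : v (⟨n - 1, by omega⟩ : Fin n) =
        x (⟨n - 1, by omega⟩ : Fin n) - y (⟨n - 1, by omega⟩ : Fin n) := rfl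
    have hδ : |δ| ≤ L * |v (⟨n - 1, by omega⟩ : Fin n)| := by
      rw [hδdef, hvlast]
      exact hC _ _
    have hwlast : (v + e0 hn0 δ) (⟨n - 1, by omega⟩ : Fin n) =
        v (⟨n - 1, by omega⟩ : Fin n) := by
      rw [euclid_add_apply, e0_last hn, add_zero]
    have hw : v + e0 hn0 δ ≠ 0 := by
      intro h0
      have hl : v (⟨n - 1, by omega⟩ : Fin n) = 0 := by
        rw [← hwlast, h0]; rfl
      rw [hl, abs_zero, mul_zero, abs_nonpos_iff] at hδ
      rw [hδ, e0_zero, add_zero] at h0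
      exact hv h0
    have hFxy : shiftMap hn C x ≠ shiftMap hn C y := by
      intro h
      apply hw
      rw [← hweq, h, sub_self]
    have hcomp1 : ∀ t : ℝ, phi (v + e0 hn0 δ) t ≤ (1 + L) * phi v t :=
      phi_compare hn0 (le_of_lt hL) hδ
    have hcomp2 : ∀ t : ℝ, phi v t ≤ (1 + L) * phi (v + e0 hn0 δ) t := by
      intro t
      have h1 : |(-δ)| ≤ L * |(v + e0 hn0 δ) (⟨n - 1, by omega⟩ : Fin n)| := by
        rw [abs_neg, hwlast]; exact hδ
      have h2 := phi_compare hn0 (le_of_lt hL) h1 t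
      rw [e0_neg, add_neg_cancel_right] at h2
      exact h2
    have hD1 : parabolicD (Jmat n) x y = Real.exp (sInf (S v)) := by
      rw [parabolicD, if_neg hxy]
      rfl
    have hD2 : parabolicD (Jmat n) (shiftMap hn C x) (shiftMap hn C y) =
        Real.exp (sInf (S (v + e0 hn0 δ))) := by
      rw [parabolicD, if_neg hFxy]
      simp only [hweq]
      rfl
    have hb1 : sInf (S (v + e0 hn0 δ)) ≤ sInf (S v) + s₀ :=
      sInf_comparison hn1 hv hw hs0 (by linarith) hcomp1 hKs
    have hb2 : sInf (S v) ≤ sInf (S (v + e0 hn0 δ)) + s₀ :=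
      sInf_comparison hn1 hw hv hs0 (by linarith) hcomp2 hKs
    rw [hD1, hD2]
    constructor
    · rw [div_le_iff₀ (Real.exp_pos _)]
      rw [← Real.exp_add]
      exact Real.exp_le_exp.mpr (by linarith)
    · rw [← Real.exp_add]
      exact Real.exp_le_exp.mpr (by linarith)
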